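/- For a formula φ(x;y) over a structure M, the Shelah 2-rank R(∅, φ, 2) equals the Littlestone (thicket) dimension of the set system {φ(b, M) : b ∈ M^{|y|}} on M^{|x|} whenever either is finite. -/

import Mathlib

/-- `LdimGe F n`: there is a binary element tree of height `n` (internal vertices
labeled by elements of `X`, leaves by members of `F`) all of whose `2^n` leaves are
well-labeled: for the leaf following branch `σ` (`true` = "go left"), the labeling
set `A` satisfies: for each vertex `a` above the leaf, `a ∈ A` iff the leaf is
left-below `a`.  Equivalently, the thicket shatter function satisfies `ρ_F n = 2^n`. -/
def LdimGe {X : Type*} (F : Set (Set X)) (n : ℕ) : Prop :=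
  ∃ t : (k : Fin n) → (Fin k.1 → Bool) → X,
    ∀ σ : Fin n → Bool, ∃ A ∈ F, ∀ k : Fin n,
      (t k (fun i => σ ⟨i.1, i.2.trans k.2⟩) ∈ A ↔ σ k = true)

/-- The Littlestone (thicket) dimension of a set system, as an extended natural number. -/
noncomputable def Ldim {X : Type*} (F : Set (Set X)) : ℕ∞ :=
  ⨆ (n : ℕ) (_ : LdimGe F n), (n : ℕ∞)

/-- A half-graph of size `n` in the bipartite membership graph of `F`. -/
def HalfGraph {X : Type*} (F : Set (Set X)) (n : ℕ) : Prop :=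
  ∃ (a : Fin n → X) (A : Fin n → Set X), (∀ j, A j ∈ F) ∧ ∀ i j, a i ∈ A j ↔ i ≤ j

open FirstOrder

/-- `RankGe M φ n π`: the Shelah 2-rank of the partial `φ`-type `π` is at least `n`.
Here a partial `φ`-type (over `M`) is a set of signed instances `(b, ε)`, meaning
`φ(x, b)^ε`; `RankGe M φ 0 π` says `π` is consistent (realized in the monster `M`),
and `RankGe M φ (n+1) π` says some instance `φ(x,b)` splits `π` into two extensions
of rank at least `n`. -/
def RankGe {L : Language} (M : Type*) [L.Structure M] {α β : Type*}
    (φ : L.Formula (α ⊕ β)) : ℕ → Set ((β → M) × Bool) → Prop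
  | 0, π => ∃ a : α → M, ∀ p ∈ π, (φ.Realize (Sum.elim a p.1) ↔ p.2 = true)
  | n + 1, π => ∃ b : β → M,
      RankGe M φ n (insert (b, true) π) ∧ RankGe M φ n (insert (b, false) π)

/-- The rank of `π` is at least `n` iff there is a height-`n` binary tree of instances
all of whose branch types (together with `π`) are consistent. -/
theorem rankGe_iff_tree {L : Language} (M : Type*) [L.Structure M] {α β : Type*}
    (φ : L.Formula (α ⊕ β)) :
    ∀ (n : ℕ) (π : Set ((β → M) × Bool)), RankGe M φ n π ↔
      ∃ t : (k : Fin n) → (Fin k.1 → Bool) → (β → M),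
        ∀ σ : Fin n → Bool, ∃ a : α → M,
          (∀ p ∈ π, (φ.Realize (Sum.elim a p.1) ↔ p.2 = true)) ∧
          ∀ k : Fin n,
            (φ.Realize (Sum.elim a (t k (fun i => σ ⟨i.1, i.2.trans k.2⟩))) ↔ σ k = true) := by
  intro n
  induction n with
  | zero =>
    intro π
    constructor
    · rintro ⟨a, ha⟩
      exact ⟨fun k => k.elim0, fun σ => ⟨a, ha, fun k => k.elim0⟩⟩
    · rintro ⟨t, ht⟩
      obtain ⟨a, ha, -⟩ := ht (fun i => i.elim0)
      exact ⟨a, ha⟩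
  | succ n ih =>
    intro π
    constructor
    · rintro ⟨b, h1, h0⟩
      obtain ⟨t1, ht1⟩ := (ih _).mp h1
      obtain ⟨t0, ht0⟩ := (ih _).mp h0
      refine ⟨fun k => Fin.cases (motive := fun k => (Fin (k : Fin (n+1)).1 → Bool) → (β → M))
        (fun _ => b)
        (fun j τ => bif τ ⟨0, Nat.succ_pos j.1⟩ then t1 j (fun i => τ i.succ)
          else t0 j (fun i => τ i.succ)) k, ?_⟩
      intro σ
      cases hε : σ 0 with
      | true =>
        obtain ⟨a, haπ, hak⟩ := ht1 (fun j => σ j.succ)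
        refine ⟨a, fun p hp => haπ p (Set.mem_insert_iff.mpr (Or.inr hp)), ?_⟩
        intro k
        induction k using Fin.cases with
        | zero =>
          show φ.Realize (Sum.elim a b) ↔ σ 0 = true
          simpa [hε] using haπ (b, true) (Set.mem_insert _ _)
        | succ j =>
          have h0' : (fun i : Fin j.succ.1 => σ ⟨i.1, i.2.trans j.succ.2⟩)
              ⟨0, Nat.succ_pos j.1⟩ = true := by
            show σ _ = true
            rw [show (⟨((⟨0, Nat.succ_pos j.1⟩ : Fin j.succ.1)).1,
              (⟨0, Nat.succ_pos j.1⟩ : Fin j.succ.1).2.trans j.succ.2⟩ : Fin (n+1)) = 0 by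
                ext; simp, hε]
          simp only [Fin.cases_succ, h0', cond_true]
          simpa using hak j
      | false =>
        obtain ⟨a, haπ, hak⟩ := ht0 (fun j => σ j.succ)
        refine ⟨a, fun p hp => haπ p (Set.mem_insert_iff.mpr (Or.inr hp)), ?_⟩
        intro k
        induction k using Fin.cases with
        | zero =>
          show φ.Realize (Sum.elim a b) ↔ σ 0 = true
          simpa [hε] using haπ (b, false) (Set.mem_insert _ _)
        | succ j =>
          have h0' : (fun i : Fin j.succ.1 => σ ⟨i.1, i.2.trans j.succ.2⟩)
              ⟨0, Nat.succ_pos j.1⟩ = false := by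
            show σ _ = false
            rw [show (⟨((⟨0, Nat.succ_pos j.1⟩ : Fin j.succ.1)).1,
              (⟨0, Nat.succ_pos j.1⟩ : Fin j.succ.1).2.trans j.succ.2⟩ : Fin (n+1)) = 0 by
                ext; simp, hε]
          simp only [Fin.cases_succ, h0', cond_false]
          simpa using hak j
    · rintro ⟨t, ht⟩
      have hempty : ∀ τ : Fin (0 : Fin (n+1)).1 → Bool, τ = fun _ => true := by
        intro τ; funext i; exact absurd i.2 (by simp)
      have key : ∀ ε : Bool, RankGe M φ n (insert (t 0 (fun _ => true), ε) π) := by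
        intro ε
        refine (ih _).mpr ⟨fun j τ => t j.succ (Fin.cases ε τ), ?_⟩
        intro σ'
        obtain ⟨a, haπ, hak⟩ := ht (Fin.cases ε σ')
        have harg : ∀ j : Fin n,
            (fun i : Fin j.succ.1 => (Fin.cases ε σ' : Fin (n+1) → Bool) ⟨i.1, i.2.trans j.succ.2⟩)
              = Fin.cases ε (fun i : Fin j.1 => σ' ⟨i.1, i.2.trans j.2⟩) := by
          intro j
          funext i
          induction i using Fin.cases with
          | zero =>
            have hz : (⟨((0 : Fin (j.1+1))).1, ((0 : Fin (j.1+1))).2.trans j.succ.2⟩ :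
                Fin (n+1)) = 0 := by ext; simp
            show (Fin.cases ε σ' : Fin (n+1) → Bool) _ = _
            rw [hz]
            simp
          | succ m =>
            have hs : (⟨(m.succ).1, (m.succ).2.trans j.succ.2⟩ : Fin (n+1))
                = Fin.succ ⟨m.1, m.2.trans j.2⟩ := by
              ext; simp
            show (Fin.cases ε σ' : Fin (n+1) → Bool) _ = _
            rw [hs]
            simp
        refine ⟨a, ?_, ?_⟩
        · rintro p hp
          rcases Set.mem_insert_iff.mp hp with h | h
          · subst h
            have h0 := hak 0
            rw [hempty (fun i => (Fin.cases ε σ' : Fin (n+1) → Bool)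
              ⟨i.1, i.2.trans (0 : Fin (n+1)).2⟩)] at h0
            simpa using h0
          · exact haπ p h
        · intro j
          have hjs := hak j.succ
          rw [show (fun i : Fin j.succ.1 =>
              (Fin.cases ε σ' : Fin (n+1) → Bool) ⟨i.1, i.2.trans j.succ.2⟩)
              = Fin.cases ε (fun i : Fin j.1 => σ' ⟨i.1, i.2.trans j.2⟩) from harg j] at hjs
          simpa using hjs
      exact ⟨t 0 (fun _ => true), key true, key false⟩

/-- the Shelah 2-rank `R(∅, φ, 2)` coincides with the Littlestone
(thicket) dimension of the set system on `M^{|y|}` given by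
`{φ(a, M) : a ∈ M^{|x|}}`: for every `n`, the rank is `≥ n` iff the thicket
dimension is `≥ n`; in particular they are equal whenever either is finite. -/
theorem shelah_rank_eq_thicket_dim {L : Language} (M : Type*) [L.Structure M]
    {α β : Type*} (φ : L.Formula (α ⊕ β)) :
    ∀ n : ℕ,
      (RankGe M φ n ∅ ↔
        LdimGe {S : Set (β → M) |
          ∃ a : α → M, S = {b : β → M | φ.Realize (Sum.elim a b)}} n) := by
  intro n
  rw [rankGe_iff_tree M φ n ∅]
  constructor
  · rintro ⟨t, ht⟩
    refine ⟨t, fun σ => ?_⟩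
    obtain ⟨a, -, h⟩ := ht σ
    exact ⟨{b | φ.Realize (Sum.elim a b)}, ⟨a, rfl⟩, h⟩
  · rintro ⟨t, ht⟩
    refine ⟨t, fun σ => ?_⟩
    obtain ⟨A, ⟨a, rfl⟩, h⟩ := ht σ
    exact ⟨a, by simp, h⟩
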